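/- Let K be a field and u ∈ Kˣ a unit (u plays the role of υ^{1/2}). Let M be the free K-module with basis {u⃗_y}_{y ∈ ℝ}. For reals a < b with b − a < 1 define K-linear endomorphisms of M by: E_{a,b}(u⃗_y) = u⁻¹·u⃗_{y+a−b} if a + y ∈ ℤ and 0 otherwise; F_{a,b}(u⃗_y) = u·u⃗_{y+b−a} if b + y ∈ ℤ and 0 otherwise. Then for all reals a < b < c with c − a < 1, the join relations E_{a,c} = u·(E_{b,c} ∘ E_{a,b}) − u⁻¹·(E_{a,b} ∘ E_{b,c}) and F_{a,c} = u⁻¹·(F_{a,b} ∘ F_{b,c}) − u·(F_{b,c} ∘ F_{a,b}) hold as equalities of K-linear endomorphisms of M. (Moreover the subtracted composite in each identity is identically zero: E_{a,b} ∘ E_{b,c} = 0 and F_{b,c} ∘ F_{a,b} = 0 when 0 < c − a < 1.) -/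

import Mathlib

open scoped Classical

/-- The operator `E_{a,b}` on the free module with basis `{u⃗_y}_{y∈ℝ}`:
`E_{a,b}(u⃗_y) = u⁻¹·u⃗_{y+a−b}` if `a + y ∈ ℤ`, and `0` otherwise. -/
noncomputable def Eop {K : Type*} [Field K] (u : Kˣ) (a b : ℝ) :
    (ℝ →₀ K) →ₗ[K] (ℝ →₀ K) :=
  Finsupp.lsum K fun y =>
    if ∃ k : ℤ, a + y = (k : ℝ) then ((u⁻¹ : Kˣ) : K) • Finsupp.lsingle (y + a - b) else 0

/-- The operator `F_{a,b}`: `F_{a,b}(u⃗_y) = u·u⃗_{y+b−a}` if `b + y ∈ ℤ`, and `0` otherwise. -/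
noncomputable def Fop {K : Type*} [Field K] (u : Kˣ) (a b : ℝ) :
    (ℝ →₀ K) →ₗ[K] (ℝ →₀ K) :=
  Finsupp.lsum K fun y =>
    if ∃ k : ℤ, b + y = (k : ℝ) then ((u : K)) • Finsupp.lsingle (y + b - a) else 0

/-- The operator `K_{c,d}^{s}` (for `s = ±1`): `K_{c,d}^{s}(u⃗_y) = v^{s·ε(y)}·u⃗_y`, where
`v = u²` and `ε(y) = 𝟙[d+y ∈ ℤ] − 𝟙[c+y ∈ ℤ]`. -/
noncomputable def Kop {K : Type*} [Field K] (u : Kˣ) (c d : ℝ) (s : ℤ) :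
    (ℝ →₀ K) →ₗ[K] (ℝ →₀ K) :=
  Finsupp.lsum K fun y =>
    ((((u ^ 2) ^ (s * ((if ∃ k : ℤ, d + y = (k : ℝ) then 1 else 0) -
        (if ∃ k : ℤ, c + y = (k : ℝ) then 1 else 0)))) : Kˣ) : K) • Finsupp.lsingle y


lemma Eop_single {K : Type*} [Field K] (u : Kˣ) (a b : ℝ) (y : ℝ) (k : K) :
    Eop u a b (Finsupp.single y k) =
      if ∃ n : ℤ, a + y = (n : ℝ) then ((u⁻¹ : Kˣ) : K) • Finsupp.single (y + a - b) k
      else 0 := by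
  unfold Eop
  rw [Finsupp.lsum_single]
  split_ifs with h <;> simp

lemma Fop_single {K : Type*} [Field K] (u : Kˣ) (a b : ℝ) (y : ℝ) (k : K) :
    Fop u a b (Finsupp.single y k) =
      if ∃ n : ℤ, b + y = (n : ℝ) then (u : K) • Finsupp.single (y + b - a) k
      else 0 := by
  unfold Fop
  rw [Finsupp.lsum_single]
  split_ifs with h <;> simp

lemma no_both {a c : ℝ} (h1 : 0 < c - a) (h2 : c - a < 1) {x z : ℝ}
    (hxz : x - z = c - a) (hx : ∃ n : ℤ, x = (n : ℝ)) : ¬ ∃ m : ℤ, z = (m : ℝ) := by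
  rintro ⟨m, rfl⟩
  obtain ⟨n, rfl⟩ := hx
  have : ((n - m : ℤ) : ℝ) = c - a := by push_cast; linarith
  have h1' : (0 : ℤ) < n - m := by exact_mod_cast this ▸ h1
  have h2' : (n - m : ℤ) < 1 := by exact_mod_cast this ▸ h2
  omega

lemma no_both' {a c : ℝ} (h1 : 0 < c - a) (h2 : c - a < 1) {x z : ℝ}
    (hxz : x - z = c - a) (hz : ∃ m : ℤ, z = (m : ℝ)) : ¬ ∃ n : ℤ, x = (n : ℝ) :=
  fun hx => no_both h1 h2 hxz hx hz

/-- the join relations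
`E_{a,c} = u·(E_{b,c}∘E_{a,b}) − u⁻¹·(E_{a,b}∘E_{b,c})` and
`F_{a,c} = u⁻¹·(F_{a,b}∘F_{b,c}) − u·(F_{b,c}∘F_{a,b})` hold on the fundamental
representation for all `a < b < c` with `c − a < 1`; moreover the subtracted composites
vanish: `E_{a,b}∘E_{b,c} = 0` and `F_{b,c}∘F_{a,b} = 0`. -/
theorem EF_join_relations {K : Type*} [Field K] (u : Kˣ) (a b c : ℝ)
    (hab : a < b) (hbc : b < c) (hlen : c - a < 1) :
    Eop u a c = (u : K) • (Eop u b c ∘ₗ Eop u a b) -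
        ((u⁻¹ : Kˣ) : K) • (Eop u a b ∘ₗ Eop u b c) ∧
    Fop u a c = ((u⁻¹ : Kˣ) : K) • (Fop u a b ∘ₗ Fop u b c) -
        (u : K) • (Fop u b c ∘ₗ Fop u a b) ∧
    Eop u a b ∘ₗ Eop u b c = 0 ∧
    Fop u b c ∘ₗ Fop u a b = 0 := by
  have hca1 : 0 < c - a := by linarith
  have hEz : Eop u a b ∘ₗ Eop u b c = 0 := by
    apply Finsupp.lhom_ext
    intro y k
    simp only [LinearMap.comp_apply, LinearMap.zero_apply, Eop_single]
    split_ifs with h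
    · rw [map_smul, Eop_single]
      rw [if_neg, smul_zero]
      exact no_both hca1 hlen (by ring) h
    · simp
  have hFz : Fop u b c ∘ₗ Fop u a b = 0 := by
    apply Finsupp.lhom_ext
    intro y k
    simp only [LinearMap.comp_apply, LinearMap.zero_apply, Fop_single]
    split_ifs with h
    · rw [map_smul, Fop_single]
      rw [if_neg, smul_zero]
      exact no_both' hca1 hlen (by ring) h
    · simp
  refine ⟨?_, ?_, hEz, hFz⟩
  · rw [hEz]; simp only [smul_zero, sub_zero]
    apply Finsupp.lhom_ext
    intro y k
    simp only [LinearMap.sub_apply, LinearMap.smul_apply, LinearMap.zero_apply,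
      LinearMap.comp_apply, sub_zero, Eop_single]
    split_ifs with h
    · rw [map_smul, Eop_single]
      have : b + (y + a - b) = a + y := by ring
      rw [this, if_pos h]
      rw [smul_smul, smul_smul]
      congr 1
      · field_simp; exact (Units.inv_mul u).symm
      · congr 1; ring
    · simp
  · rw [hFz]; simp only [smul_zero, sub_zero]
    apply Finsupp.lhom_ext
    intro y k
    simp only [LinearMap.sub_apply, LinearMap.smul_apply, LinearMap.zero_apply,
      LinearMap.comp_apply, sub_zero, Fop_single]
    split_ifs with h
    · rw [map_smul, Fop_single]
      have : b + (y + c - b) = c + y := by ring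
      rw [this, if_pos h]
      rw [smul_smul, smul_smul]
      congr 1
      · field_simp; exact (Units.mul_inv u).symm
      · congr 1; ring
    · simp
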